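/- Under a recursively balanced picking sequence with sequential allocation and strictly positive utilities, the resulting allocation p satisfies necessary EF1: for all agents i, j, letting t_1 be the first item picked by j, there is an injection f from p(j) \ {t_1} into p(i) such that for every item o in p(j) \ {t_1}, agent i weakly prefers f(o) to o (with respect to i's ordinal preference). -/

import Mathlib

open Finset

/-- Sequential allocation with ordinal preferences: each agent on their turn picks a
most-preferred remaining item. -/
def seqValidPref {A O : Type*} [DecidableEq O] (pref : A → O → O → Prop) :
    List A → List O → Finset O → Prop
  | [], [], _ => True
  | a :: s, o :: ps, rem =>
      o ∈ rem ∧ (∀ o' ∈ rem, pref a o o') ∧ seqValidPref pref s ps (rem.erase o)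
  | _, _, _ => False

/-- The list of items picked by agent `i`, in picking order. -/
def picksOf {A O : Type*} [DecidableEq A] (seq : List A) (picks : List O) (i : A) : List O :=
  (seq.zip picks).filterMap (fun x => if x.1 = i then some x.2 else none)

/-- A sequence of turns is recursively balanced if at every prefix the numbers of turns of
any two agents differ by at most one. -/
def RecBalanced {A : Type*} [DecidableEq A] (seq : List A) : Prop :=
  ∀ k : ℕ, ∀ i j : A, (seq.take k).count i ≤ (seq.take k).count j + 1

set_option linter.unusedSectionVars false
section Aux
variable {A O : Type*} [DecidableEq A] [DecidableEq O] {pref : A → O → O → Prop}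

lemma seqValid_len : ∀ (s : List A) (ps : List O) (rem : Finset O),
    seqValidPref pref s ps rem → s.length = ps.length
  | [], [], _, _ => rfl
  | a :: s, o :: ps, rem, h => by
      simp only [seqValidPref] at h
      simpa using seqValid_len s ps _ h.2.2
  | [], _ :: _, _, h => by simp [seqValidPref] at h
  | _ :: _, [], _, h => by simp [seqValidPref] at h

lemma seqValid_mem : ∀ (s : List A) (ps : List O) (rem : Finset O),
    seqValidPref pref s ps rem → ∀ x ∈ ps, x ∈ rem
  | [], [], _, _ => by simp
  | a :: s, o :: ps, rem, h => by
      simp only [seqValidPref] at h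
      intro x hx
      rcases List.mem_cons.1 hx with rfl | hx
      · exact h.1
      · exact Finset.mem_of_mem_erase (seqValid_mem s ps _ h.2.2 x hx)
  | [], _ :: _, _, h => by simp [seqValidPref] at h
  | _ :: _, [], _, h => by simp [seqValidPref] at h

lemma seqValid_nodup : ∀ (s : List A) (ps : List O) (rem : Finset O),
    seqValidPref pref s ps rem → ps.Nodup
  | [], [], _, _ => by simp
  | a :: s, o :: ps, rem, h => by
      simp only [seqValidPref] at h
      refine List.nodup_cons.2 ⟨fun hmem => ?_, seqValid_nodup s ps _ h.2.2⟩
      exact (Finset.notMem_erase o rem) (seqValid_mem s ps _ h.2.2 o hmem)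
  | [], _ :: _, _, h => by simp [seqValidPref] at h
  | _ :: _, [], _, h => by simp [seqValidPref] at h

lemma seqValid_pref_lt : ∀ (s : List A) (ps : List O) (rem : Finset O),
    seqValidPref pref s ps rem → ∀ k l (hkl : k < l) (hl : l < ps.length)
    (hk : k < s.length),
    pref (s[k]) (ps[k]'(hkl.trans hl)) (ps[l])
  | [], [], _, _ => by simp
  | a :: s, o :: ps, rem, h => by
      simp only [seqValidPref] at h
      rintro k l hkl hl hk
      match k, l with
      | 0, l + 1 =>
          simp only [List.getElem_cons_zero, List.getElem_cons_succ]
          exact h.2.1 _ (Finset.mem_of_mem_erase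
            (seqValid_mem s ps _ h.2.2 _ (List.getElem_mem _)))
      | k + 1, l + 1 =>
          simp only [List.getElem_cons_succ]
          exact seqValid_pref_lt s ps _ h.2.2 k l (by omega) (by simpa using hl)
            (by simpa using hk)
  | [], _ :: _, _, h => by simp [seqValidPref] at h
  | _ :: _, [], _, h => by simp [seqValidPref] at h

lemma picksOf_eq_filter (seq : List A) (picks : List O) (i : A) :
    picksOf seq picks i
      = ((seq.zip picks).filter (fun x => decide (x.1 = i))).map Prod.snd := by
  unfold picksOf
  induction seq.zip picks with
  | nil => rfl
  | cons x l ih =>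
      by_cases hx : x.1 = i <;> simp [List.filterMap_cons, List.filter_cons, hx, ih]

lemma countP_fst_zip (i : A) : ∀ (s : List A) (ps : List O), s.length = ps.length →
    ((s.zip ps).countP fun x => decide (x.1 = i)) = s.count i
  | [], [], _ => by simp
  | a :: s, o :: ps, h => by
      simp only [List.zip_cons_cons, List.countP_cons, List.count_cons]
      rw [countP_fst_zip i s ps (by simpa using h)]
      by_cases ha : a = i <;> simp [ha]

set_option maxRecDepth 4000 in
/-- the (k+1)-th element of a filter splits the list -/
lemma filter_split {α : Type*} (q : α → Bool) :
    ∀ (z : List α) (k : ℕ) (hk : k < (z.filter q).length),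
    ∃ u x v, z = u ++ x :: v ∧ q x ∧ u.filter q = (z.filter q).take k ∧
      x = (z.filter q)[k]
  | [], k, hk => by simp at hk
  | y :: z, k, hk => by
      by_cases hy : q y
      · match k with
        | 0 => exact ⟨[], y, z, by simp [hy]⟩
        | k + 1 =>
            have hk' : k < (z.filter q).length := by
              simp [List.filter_cons, hy] at hk; omega
            obtain ⟨u, x, v, rfl, hqx, hu, hx⟩ := filter_split q z k hk'
            refine ⟨y :: u, x, v, rfl, hqx, ?_, ?_⟩
            · simp only [List.filter_cons, hy, if_true, List.take_succ_cons]
              rw [hu]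
            · simp only [List.filter_cons, hy, if_true, List.getElem_cons_succ]
              exact hx
      · have hk' : k < (z.filter q).length := by simpa [List.filter_cons, hy] using hk
        obtain ⟨u, x, v, rfl, hqx, hu, hx⟩ := filter_split q z k hk'
        refine ⟨y :: u, x, v, rfl, hqx, ?_, ?_⟩
        · simp only [List.filter_cons, hy, if_false, Bool.false_eq_true, ite_false]
          rw [hu]
        · simp only [List.filter_cons, hy, Bool.false_eq_true, ite_false]
          exact hx

end Aux

lemma interleave {n : ℕ} {O : Type*} [Fintype O] [DecidableEq O]
    {pref : Fin n → O → O → Prop}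
    {seq : List (Fin n)} (hRB : RecBalanced seq)
    {picks : List O} (hvalid : seqValidPref pref seq picks Finset.univ)
    {i j : Fin n} (hij : i ≠ j) {k : ℕ} (hk1 : 1 ≤ k)
    (hk : k < (picksOf seq picks j).length) :
    ∃ h : k ≤ (picksOf seq picks i).length,
      pref i ((picksOf seq picks i)[k-1]'(by omega)) ((picksOf seq picks j)[k]'hk) := by
  classical
  have hlen : seq.length = picks.length := seqValid_len seq picks _ hvalid
  set z := seq.zip picks with hzdef
  set qj : Fin n × O → Bool := fun x => decide (x.1 = j) with hqjdef
  set qi : Fin n × O → Bool := fun x => decide (x.1 = i) with hqidef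
  have hzlen : z.length = picks.length := by simp [hzdef, hlen]
  have hLJ : picksOf seq picks j = (z.filter qj).map Prod.snd :=
    picksOf_eq_filter seq picks j
  have hLI : picksOf seq picks i = (z.filter qi).map Prod.snd :=
    picksOf_eq_filter seq picks i
  have hk' : k < (z.filter qj).length := by
    rw [hLJ, List.length_map] at hk; exact hk
  obtain ⟨u, x, v, hz, hqx, hu, hx⟩ := filter_split qj z k hk'
  have hxj : x.1 = j := of_decide_eq_true hqx
  -- the prefix of z of length u.length + 1
  have htake : z.take (u.length + 1) = u ++ [x] := by
    rw [hz, List.take_append]; simp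
  have hulen : u.length + 1 ≤ z.length := by
    rw [hz]; simp
  -- counting j in the prefix
  have hcountj : (u ++ [x]).countP qj = k + 1 := by
    rw [List.countP_append, List.countP_eq_length_filter, hu, List.length_take,
      List.countP_eq_length_filter]
    simp [List.filter_cons, hqx]
    omega
  -- balance translated to z
  have hzt : ∀ m, z.take m = (seq.take m).zip (picks.take m) := by
    intro m; simp [hzdef, List.zip, List.take_zipWith]
  have hcount_eq : ∀ (a : Fin n) (m : ℕ),
      (z.take m).countP (fun x => decide (x.1 = a)) = (seq.take m).count a := by
    intro a m
    rw [hzt m]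
    exact countP_fst_zip a _ _ (by simp [hlen])
  have hbal := hRB (u.length + 1) j i
  have hcj : (seq.take (u.length + 1)).count j = k + 1 := by
    rw [← hcount_eq j, htake]; exact hcountj
  have hxi : qi x = false := by
    simp only [hqidef, decide_eq_false_iff_not]
    rw [hxj]; exact fun h => hij (h.symm)
  have hcounti : k ≤ u.countP qi := by
    have h1 : (seq.take (u.length + 1)).count i = (u ++ [x]).countP qi := by
      rw [← hcount_eq i, htake]
    have h2 : (u ++ [x]).countP qi = u.countP qi := by
      simp [List.countP_append, hxi]
    omega
  have huf : k ≤ (u.filter qi).length := by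
    rw [← List.countP_eq_length_filter]; exact hcounti
  -- LI has length ≥ k
  have hfiltz : z.filter qi = u.filter qi ++ (x :: v).filter qi := by
    rw [hz, List.filter_append]
  have hLIlen : k ≤ (picksOf seq picks i).length := by
    rw [hLI, List.length_map, hfiltz, List.length_append]; omega
  refine ⟨hLIlen, ?_⟩
  -- identify LI[k-1]
  have hk1' : k - 1 < (u.filter qi).length := by omega
  set e := (u.filter qi)[k-1]'hk1' with hedef
  have hei : e.1 = i := by
    have := List.getElem_mem hk1'
    rw [← hedef] at this
    exact of_decide_eq_true (List.mem_filter.1 this).2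
  have heu : e ∈ u := List.mem_of_mem_filter (by rw [hedef]; exact List.getElem_mem hk1')
  obtain ⟨P', hP', hPe⟩ := List.mem_iff_getElem.1 heu
  have hLIe : (picksOf seq picks i)[k-1]'(by omega) = e.2 := by
    rw [List.getElem_of_eq hLI, List.getElem_map]
    have h1 : (z.filter qi)[k-1]'(by rw [hfiltz]; simp; omega) = e := by
      rw [List.getElem_of_eq hfiltz, List.getElem_append_left hk1']
    rw [h1]
  have hLJx : (picksOf seq picks j)[k]'hk = x.2 := by
    rw [List.getElem_of_eq hLJ, List.getElem_map, ← hx]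
  -- positions in z
  have hP'z : P' < z.length := by rw [hz]; simp; omega
  have hPz : u.length < z.length := by rw [hz]; simp
  have hzP' : z[P']'hP'z = e := by
    rw [List.getElem_of_eq hz, List.getElem_append_left hP']
    exact hPe
  have hzP : z[u.length]'hPz = x := by
    rw [List.getElem_of_eq hz, List.getElem_append_right (le_refl _)]
    simp
  have hseqP' : seq[P']'(by rw [hlen]; omega) = i := by
    have := List.getElem_zip (l := seq) (l' := picks) (i := P') (h := hP'z)
    rw [hzP'] at this
    have h1 := congrArg Prod.fst this
    simpa [hei] using h1.symm
  have hpicksP' : picks[P']'(by omega) = e.2 := by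
    have := List.getElem_zip (l := seq) (l' := picks) (i := P') (h := hP'z)
    rw [hzP'] at this
    exact (congrArg Prod.snd this).symm
  have hpicksP : picks[u.length]'(by omega) = x.2 := by
    have := List.getElem_zip (l := seq) (l' := picks) (i := u.length) (h := hPz)
    rw [hzP] at this
    exact (congrArg Prod.snd this).symm
  have hmain := seqValid_pref_lt seq picks _ hvalid P' u.length hP'
    (by omega) (by rw [hlen]; omega)
  rw [hseqP', hpicksP', hpicksP] at hmain
  rw [hLIe, hLJx]
  exact hmain

/-- Sequential allocation along a recursively balanced sequence satisfies NEF1: for all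
agents `i, j`, removing the first item `t₁` picked by `j`, there is an injection `f` from
`p(j) \ {t₁}` into `p(i)` with `f o ≿ᵢ o` for all `o`. -/
theorem stmt2 {n : ℕ} {O : Type*} [Fintype O] [DecidableEq O]
    (pref : Fin n → O → O → Prop)
    (htotal : ∀ a x y, pref a x y ∨ pref a y x)
    (htrans : ∀ a : Fin n, Transitive (pref a))
    (seq : List (Fin n)) (hRB : RecBalanced seq)
    (picks : List O) (hvalid : seqValidPref pref seq picks Finset.univ) :
    ∀ i j : Fin n, ∀ t₁ : O, (picksOf seq picks j).head? = some t₁ →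
      ∃ f : O → O,
        Set.InjOn f ((picksOf seq picks j).toFinset.erase t₁) ∧
        ∀ o ∈ (picksOf seq picks j).toFinset.erase t₁,
          f o ∈ (picksOf seq picks i).toFinset ∧ pref i (f o) o := by

  intro i j t₁ ht₁
  by_cases hij : i = j
  · subst hij
    refine ⟨id, fun a _ b _ h => h, fun o ho => ?_⟩
    exact ⟨Finset.mem_of_mem_erase ho, (htotal i o o).elim id id⟩
  · set LJ := picksOf seq picks j with hLJdef
    set LI := picksOf seq picks i with hLIdef
    have hlen : seq.length = picks.length := seqValid_len seq picks _ hvalid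
    have hnodup : picks.Nodup := seqValid_nodup seq picks _ hvalid
    have hsub : ∀ a, List.Sublist (picksOf seq picks a) picks := by
      intro a
      rw [picksOf_eq_filter]
      have h1 := (List.filter_sublist (l := seq.zip picks)
        (p := fun x => decide (x.1 = a))).map Prod.snd
      rwa [List.map_snd_zip (le_of_eq hlen.symm)] at h1
    have hNJ : LJ.Nodup := hnodup.sublist (hsub j)
    have hNI : LI.Nodup := hnodup.sublist (hsub i)
    have ht0 : ∃ hh : 0 < LJ.length, LJ[0] = t₁ := by
      cases hLJ : LJ with
      | nil => rw [hLJ] at ht₁; simp at ht₁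
      | cons a l => rw [hLJ] at ht₁; simp at ht₁; exact ⟨by simp, by simpa using ht₁⟩
    obtain ⟨hh0, hLJ0⟩ := ht0
    -- per element facts
    have key : ∀ o ∈ LJ.toFinset.erase t₁,
        1 ≤ LJ.idxOf o ∧ LJ.idxOf o < LJ.length ∧
        ∃ h : LJ.idxOf o - 1 < LI.length,
          LI.getD (LJ.idxOf o - 1) o = LI[LJ.idxOf o - 1]'h ∧
          pref i (LI[LJ.idxOf o - 1]'h) o := by
      intro o ho
      obtain ⟨hne, hoJ⟩ := Finset.mem_erase.1 ho
      have hoJ' : o ∈ LJ := List.mem_toFinset.1 hoJ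
      have hlt : LJ.idxOf o < LJ.length := List.idxOf_lt_length_iff.2 hoJ'
      have hget : LJ[LJ.idxOf o]'hlt = o := List.getElem_idxOf hlt
      have h1 : 1 ≤ LJ.idxOf o := by
        rcases Nat.eq_zero_or_pos (LJ.idxOf o) with h | h
        · exfalso; apply hne; rw [← hget]; simp_rw [h]; exact hLJ0
        · exact h
      obtain ⟨hle, hpref⟩ := interleave hRB hvalid hij h1 hlt
      simp only [← hLJdef, ← hLIdef] at hle hpref
      refine ⟨h1, hlt, by omega, ?_, ?_⟩
      · simp [List.getD_eq_getElem?_getD,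
          List.getElem?_eq_getElem (show LJ.idxOf o - 1 < LI.length by omega)]
      · rw [hget] at hpref
        exact hpref
    refine ⟨fun o => LI.getD (LJ.idxOf o - 1) o, ?_, ?_⟩
    · intro o₁ ho₁ o₂ ho₂ hf
      obtain ⟨h11, h12, h13, h14, -⟩ := key o₁ ho₁
      obtain ⟨h21, h22, h23, h24, -⟩ := key o₂ ho₂
      simp only at hf
      rw [h14, h24] at hf
      have := (hNI.getElem_inj_iff).1 hf
      have hidx : LJ.idxOf o₁ = LJ.idxOf o₂ := by omega
      have e1 : LJ[LJ.idxOf o₁]'h12 = o₁ := List.getElem_idxOf h12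
      have e2 : LJ[LJ.idxOf o₂]'h22 = o₂ := List.getElem_idxOf h22
      rw [← e1, ← e2]
      congr 1
    · intro o ho
      obtain ⟨h1, h2, h3, h4, h5⟩ := key o ho
      constructor
      · show LI.getD (LJ.idxOf o - 1) o ∈ LI.toFinset
        rw [h4]; exact List.mem_toFinset.2 (List.getElem_mem h3)
      · show pref i (LI.getD (LJ.idxOf o - 1) o) o
        rw [h4]; exact h5
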